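/- Let d ≥ 1, let B be a finite nonempty index set, let β : B → [0,1] be weights with β^B := Σ_{b∈B} β_b > 0, let z : B → ℝ^d, and let B′ ⊆ B be a nonempty subset such that β_b ≥ 1/2 for every b ∈ B′. Set μ_β := Σ_{b∈B} (β_b/β^B)·z_b and μ′ := (1/|B′|)·Σ_{b∈B′} z_b. Then there exists a unit vector u ∈ ℝ^d such that Σ_{b∈B} (β_b/β^B)·⟨z_b − μ_β, u⟩² ≥ (|B′|/(2|B|))·‖μ_β − μ′‖² (equivalently, the operator norm of the weighted covariance matrix Σ_{b∈B} (β_b/β^B)(z_b − μ_β)(z_b − μ_β)ᵀ is at least (|B′|/(2|B|))·‖μ_β − μ′‖²). -/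

import Mathlib

open scoped RealInnerProductSpace
set_option maxHeartbeats 1000000

/-- For weights `β : B → [0,1]` with positive total weight and a nonempty
`B′ ⊆ B` on which `β_b ≥ 1/2`, there is a unit vector `u` such that the weighted variance
of `⟨z_b, u⟩` is at least `(|B′|/(2|B|))·‖μ_β − μ′‖²`, where `μ_β` is the `β`-weighted mean
of `z` over `B` and `μ′` the unweighted mean over `B′`. -/
theorem stmt4 {d : ℕ} (hd : 1 ≤ d) {ι : Type*} (B B' : Finset ι)
    (hB : B.Nonempty) (hB'B : B' ⊆ B) (hB' : B'.Nonempty)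
    (β : ι → ℝ) (hβ : ∀ b ∈ B, 0 ≤ β b ∧ β b ≤ 1)
    (hβpos : 0 < ∑ b ∈ B, β b)
    (hhalf : ∀ b ∈ B', 1 / 2 ≤ β b)
    (z : ι → EuclideanSpace ℝ (Fin d)) :
    ∃ u : EuclideanSpace ℝ (Fin d), ‖u‖ = 1 ∧
      ((B'.card : ℝ) / (2 * B.card)) *
          ‖(∑ b ∈ B, (β b / ∑ a ∈ B, β a) • z b) - (B'.card : ℝ)⁻¹ • ∑ b ∈ B', z b‖ ^ 2 ≤
        ∑ b ∈ B, (β b / ∑ a ∈ B, β a) *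
          ⟪z b - ∑ a ∈ B, (β a / ∑ c ∈ B, β c) • z a, u⟫ ^ 2 := by
  set S := ∑ a ∈ B, β a with hS
  set μ : EuclideanSpace ℝ (Fin d) := ∑ b ∈ B, (β b / S) • z b with hμ
  set μ' : EuclideanSpace ℝ (Fin d) := (B'.card : ℝ)⁻¹ • ∑ b ∈ B', z b with hμ'
  have hcard' : (0 : ℝ) < B'.card := by exact_mod_cast Finset.card_pos.mpr hB'
  have hcard : (0 : ℝ) < B.card := by exact_mod_cast Finset.card_pos.mpr hB
  have hSle : S ≤ B.card := by
    calc S ≤ ∑ _a ∈ B, (1 : ℝ) := Finset.sum_le_sum fun b hb => (hβ b hb).2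
    _ = B.card := by simp
  have hnonneg : ∀ u : EuclideanSpace ℝ (Fin d),
      0 ≤ ∑ b ∈ B, (β b / S) * ⟪z b - μ, u⟫ ^ 2 := fun u =>
    Finset.sum_nonneg fun b hb =>
      mul_nonneg (div_nonneg (hβ b hb).1 hβpos.le) (sq_nonneg _)
  by_cases h : μ = μ'
  · refine ⟨EuclideanSpace.single ⟨0, hd⟩ 1, by simp, ?_⟩
    have h0 : ‖μ - μ'‖ = 0 := by rw [h, sub_self, norm_zero]
    rw [h0]
    have := hnonneg (EuclideanSpace.single (⟨0, hd⟩ : Fin d) (1:ℝ))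
    nlinarith [this]
  · set v := μ' - μ with hv
    have hv0 : v ≠ 0 := sub_ne_zero.mpr (Ne.symm h)
    have hnv : (0 : ℝ) < ‖v‖ := norm_pos_iff.mpr hv0
    set u : EuclideanSpace ℝ (Fin d) := ‖v‖⁻¹ • v with hu
    have hunorm : ‖u‖ = 1 := by
      rw [hu, norm_smul, norm_inv, norm_norm, inv_mul_cancel₀ hnv.ne']
    refine ⟨u, hunorm, ?_⟩
    set x : ι → ℝ := fun b => ⟪z b - μ, u⟫ with hx
    have hsum : ∑ b ∈ B', x b = B'.card * ‖v‖ := by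
      have h1 : ∑ b ∈ B', x b = ⟪∑ b ∈ B', (z b - μ), u⟫ := (sum_inner _ _ _).symm
      have h2 : ∑ b ∈ B', (z b - μ) = (B'.card : ℝ) • v := by
        rw [Finset.sum_sub_distrib, Finset.sum_const, hv, smul_sub, hμ']
        rw [smul_smul, mul_inv_cancel₀ hcard'.ne', one_smul, ← Nat.cast_smul_eq_nsmul ℝ]
      rw [h1, h2, hu, real_inner_smul_left, real_inner_smul_right,
        real_inner_self_eq_norm_sq]
      field_simp
    -- Cauchy-Schwarz
    have hCS : (B'.card : ℝ) * ‖v‖ ^ 2 ≤ ∑ b ∈ B', x b ^ 2 := by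
      have := sq_sum_le_card_mul_sum_sq (s := B') (f := x)
      rw [hsum] at this
      have h3 : (B'.card : ℝ) * ((B'.card : ℝ) * ‖v‖ ^ 2) ≤
          (B'.card : ℝ) * ∑ b ∈ B', x b ^ 2 := by
        calc (B'.card : ℝ) * ((B'.card : ℝ) * ‖v‖ ^ 2)
            = ((B'.card : ℝ) * ‖v‖) ^ 2 := by ring
          _ ≤ (B'.card : ℝ) * ∑ b ∈ B', x b ^ 2 := this
      exact le_of_mul_le_mul_left h3 hcard'
    have hstep1 : ∑ b ∈ B', (1 / (2 * (B.card : ℝ))) * x b ^ 2 ≤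
        ∑ b ∈ B', (β b / S) * x b ^ 2 := by
      refine Finset.sum_le_sum fun b hb => ?_
      have hw : (1 : ℝ) / (2 * B.card) ≤ β b / S := by
        rw [div_le_div_iff₀ (mul_pos two_pos hcard) hβpos]
        nlinarith [hhalf b hb]
      exact mul_le_mul_of_nonneg_right hw (sq_nonneg _)
    have hstep2 : ∑ b ∈ B', (β b / S) * x b ^ 2 ≤ ∑ b ∈ B, (β b / S) * x b ^ 2 :=
      Finset.sum_le_sum_of_subset_of_nonneg hB'B fun b hb _ =>
        mul_nonneg (div_nonneg (hβ b hb).1 hβpos.le) (sq_nonneg _)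
    have hnorm_eq : ‖μ - μ'‖ = ‖v‖ := by rw [hv, norm_sub_rev]
    calc ((B'.card : ℝ) / (2 * B.card)) * ‖μ - μ'‖ ^ 2
        = (1 / (2 * (B.card : ℝ))) * ((B'.card : ℝ) * ‖v‖ ^ 2) := by
          rw [hnorm_eq]; ring
      _ ≤ (1 / (2 * (B.card : ℝ))) * ∑ b ∈ B', x b ^ 2 :=
          mul_le_mul_of_nonneg_left hCS (one_div_nonneg.mpr (mul_pos two_pos hcard).le)
      _ = ∑ b ∈ B', (1 / (2 * (B.card : ℝ))) * x b ^ 2 := Finset.mul_sum _ _ _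
      _ ≤ ∑ b ∈ B', (β b / S) * x b ^ 2 := hstep1
      _ ≤ ∑ b ∈ B, (β b / S) * x b ^ 2 := hstep2
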